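/- Let n ≥ 1 and 1 < p < ∞. There exist constants 0 < c < C, depending only on n and p, such that for every 0 < δ < 1, the weight w(x) = |x|^{(n−δ)(p−1)} on ℝ^n satisfies c δ^{1−p} ≤ [w]_{A_p} ≤ C δ^{1−p}; in particular w ∈ A_p. -/

import Mathlib

open MeasureTheory ENNReal

noncomputable section

/-- Axis-parallel cube in `ℝⁿ` (with the Euclidean norm) with lower corner `a` and side
length `h`. -/
def CubeE (n : ℕ) (a : Fin n → ℝ) (h : ℝ) : Set (EuclideanSpace ℝ (Fin n)) :=
  {x | ∀ i, a i ≤ x i ∧ x i ≤ a i + h}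

/-- `|Q|⁻¹ ∫_Q f`, as an extended nonnegative real. -/
def setAvgE (n : ℕ) (Q : Set (EuclideanSpace ℝ (Fin n)))
    (f : EuclideanSpace ℝ (Fin n) → ℝ) : ℝ≥0∞ :=
  (volume Q)⁻¹ * ∫⁻ x in Q, ENNReal.ofReal (f x)

/-- The `A_p` constant `[w]_{A_p} = sup_Q (|Q|⁻¹∫_Q w)(|Q|⁻¹∫_Q w^{-1/(p-1)})^{p-1}`, the
supremum being over all axis-parallel cubes. -/
def ApConstE (n : ℕ) (p : ℝ) (w : EuclideanSpace ℝ (Fin n) → ℝ) : ℝ≥0∞ :=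
  ⨆ (a : Fin n → ℝ) (h : ℝ) (_ : 0 < h),
    setAvgE n (CubeE n a h) w *
      (setAvgE n (CubeE n a h) (fun x => w x ^ (-(p - 1)⁻¹))) ^ (p - 1)

/-! ### Auxiliary material -/

/-- Axis-parallel box. -/
def BoxE (n : ℕ) (a b : Fin n → ℝ) : Set (EuclideanSpace ℝ (Fin n)) :=
  {x | ∀ i, a i ≤ x i ∧ x i ≤ b i}

lemma boxE_measurable (n : ℕ) (a b : Fin n → ℝ) : MeasurableSet (BoxE n a b) := by
  have : BoxE n a b =
      (MeasurableEquiv.toLp 2 (Fin n → ℝ)).symm ⁻¹' (Set.univ.pi fun i => Set.Icc (a i) (b i)) := by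
    ext x
    simp [BoxE, Set.mem_pi, MeasurableEquiv.toLp, Set.mem_Icc, Pi.le_def, forall_and]
    exact Iff.rfl
  rw [this]
  exact (MeasurableSet.univ_pi fun i => measurableSet_Icc).preimage
    (MeasurableEquiv.toLp 2 (Fin n → ℝ)).symm.measurable

lemma volume_boxE (n : ℕ) (a b : Fin n → ℝ) :
    volume (BoxE n a b) = ∏ i, ENNReal.ofReal (b i - a i) := by
  have h : BoxE n a b =
      (MeasurableEquiv.toLp 2 (Fin n → ℝ)).symm ⁻¹' (Set.univ.pi fun i => Set.Icc (a i) (b i)) := by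
    ext x
    simp [BoxE, Set.mem_pi, MeasurableEquiv.toLp, Set.mem_Icc, Pi.le_def, forall_and]
    exact Iff.rfl
  rw [h, (EuclideanSpace.volume_preserving_symm_measurableEquiv_toLp (Fin n)).measure_preimage
    ((MeasurableSet.univ_pi fun i => measurableSet_Icc).nullMeasurableSet)]
  rw [volume_pi_pi]
  simp [Real.volume_Icc]

lemma abs_coord_le_norm {n : ℕ} (x : EuclideanSpace ℝ (Fin n)) (i : Fin n) : |x i| ≤ ‖x‖ := by
  rw [EuclideanSpace.norm_eq, ← Real.sqrt_sq_eq_abs]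
  apply Real.sqrt_le_sqrt
  have : ‖x i‖^2 ≤ ∑ j, ‖x j‖ ^ 2 :=
    Finset.single_le_sum (f := fun j => ‖x j‖^2) (fun j _ => by positivity) (Finset.mem_univ i)
  simpa using this

lemma norm_le_of_coords {n : ℕ} (x : EuclideanSpace ℝ (Fin n)) (M : ℝ) (hM : 0 ≤ M)
    (h : ∀ i, |x i| ≤ M) : ‖x‖ ≤ Real.sqrt n * M := by
  rw [EuclideanSpace.norm_eq]
  have h1 : ∑ j, ‖x j‖ ^ 2 ≤ n * M ^ 2 := by
    calc ∑ j, ‖x j‖ ^ 2 ≤ ∑ _j : Fin n, M ^ 2 := by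
          apply Finset.sum_le_sum; intro j _
          have := h j
          rw [Real.norm_eq_abs]
          nlinarith [abs_nonneg (x j)]
      _ = n * M ^ 2 := by simp
  calc Real.sqrt (∑ j, ‖x j‖ ^ 2) ≤ Real.sqrt (n * M ^ 2) := Real.sqrt_le_sqrt h1
    _ = Real.sqrt n * M := by rw [Real.sqrt_mul (by positivity), Real.sqrt_sq hM]

lemma two_rpow_lb {δ : ℝ} (h0 : 0 < δ) (h1 : δ < 1) : δ/5 ≤ 1 - (2:ℝ)⁻¹ ^ δ := by
  have hlog : (0.6931471803 : ℝ) < Real.log 2 := Real.log_two_gt_d9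
  have he : (2:ℝ)⁻¹ ^ δ = Real.exp (-(Real.log 2 * δ)) := by
    rw [Real.rpow_def_of_pos (by norm_num), Real.log_inv, neg_mul]
  rw [he]
  set t := Real.log 2 * δ with ht
  have ht0 : 0 < t := by positivity
  have h2 : Real.exp (-t) ≤ (1 + t)⁻¹ := by
    rw [Real.exp_neg]
    apply inv_anti₀ (by linarith)
    linarith [Real.add_one_le_exp t]
  have ht1 : t ≤ 1 := by
    have : Real.log 2 < 1 := by
      have := Real.log_two_lt_d9
      linarith
    nlinarith
  have hδt : δ/4 ≤ t := by nlinarith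
  have : (1 + t)⁻¹ ≤ 1 - δ/5 := by
    rw [inv_le_iff_one_le_mul₀ (by linarith)]
    nlinarith
  linarith

lemma two_rpow_ub {δ : ℝ} (h0 : 0 < δ) (h1 : δ < 1) : 1 - (2:ℝ)⁻¹ ^ δ ≤ δ := by
  have he : (2:ℝ)⁻¹ ^ δ = Real.exp (-(Real.log 2 * δ)) := by
    rw [Real.rpow_def_of_pos (by norm_num), Real.log_inv, neg_mul]
  rw [he]
  have h2 := Real.add_one_le_exp (-(Real.log 2 * δ))
  have hl : Real.log 2 ≤ 1 := by
    have := Real.log_two_lt_d9; linarith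
  nlinarith

lemma geom_eq {δ : ℝ} (h0 : 0 < δ) (h1 : δ < 1) :
    ∑' k : ℕ, ENNReal.ofReal (((2:ℝ)⁻¹ ^ δ)^k) = ENNReal.ofReal ((1 - (2:ℝ)⁻¹ ^ δ)⁻¹) := by
  set s := (2:ℝ)⁻¹ ^ δ with hs
  have hs0 : 0 ≤ s := by positivity
  have hs1 : s < 1 := by
    have := two_rpow_lb h0 h1; linarith
  have : ∀ k : ℕ, ENNReal.ofReal (s^k) = (ENNReal.ofReal s)^k := fun k => ENNReal.ofReal_pow hs0 k
  rw [tsum_congr this, ENNReal.tsum_geometric]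
  rw [← ENNReal.ofReal_one, ← ENNReal.ofReal_sub _ hs0, ENNReal.ofReal_inv_of_pos (by linarith)]

lemma geom_ub {δ : ℝ} (h0 : 0 < δ) (h1 : δ < 1) :
    ∑' k : ℕ, ENNReal.ofReal (((2:ℝ)⁻¹ ^ δ)^k) ≤ ENNReal.ofReal (5/δ) := by
  rw [geom_eq h0 h1]
  apply ENNReal.ofReal_le_ofReal
  rw [inv_le_iff_one_le_mul₀ (by have := two_rpow_lb h0 h1; linarith)]
  have h5 : (5:ℝ)/δ * (δ/5) ≤ 5/δ * (1 - (2:ℝ)⁻¹ ^ δ) := by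
    apply mul_le_mul_of_nonneg_left (two_rpow_lb h0 h1) (by positivity)
  have : (5:ℝ)/δ * (δ/5) = 1 := by field_simp
  linarith

lemma geom_lb {δ : ℝ} (h0 : 0 < δ) (h1 : δ < 1) :
    ENNReal.ofReal δ⁻¹ ≤ ∑' k : ℕ, ENNReal.ofReal (((2:ℝ)⁻¹ ^ δ)^k) := by
  rw [geom_eq h0 h1]
  apply ENNReal.ofReal_le_ofReal
  have h2 := two_rpow_ub h0 h1
  have h3 := two_rpow_lb h0 h1
  exact inv_anti₀ (by linarith) h2

lemma annulus_real_est (n : ℕ) {δ R : ℝ} (h0 : 0 < δ) (h1 : δ < 1) (hR : 0 < R) (k : ℕ) :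
    (R * (2:ℝ)⁻¹ ^ (k+1)) ^ (δ - (n:ℝ)) * (R * (2:ℝ)⁻¹ ^ k) ^ (n:ℕ)
      ≤ R ^ δ * 2 ^ (n:ℕ) * ((2:ℝ)⁻¹ ^ δ) ^ k := by
  set q : ℝ := (2:ℝ)⁻¹ with hq
  have hq0 : (0:ℝ) < q := by norm_num [hq]
  have hqk : (0:ℝ) < q ^ k := by positivity
  set r : ℝ := R * q ^ k with hr
  have hr0 : (0:ℝ) < r := by positivity
  have hstep : R * q ^ (k+1) = r * q := by rw [hr, pow_succ]; ring
  rw [hstep]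
  have h1' : (r * q) ^ (δ - (n:ℝ)) = r ^ (δ - (n:ℝ)) * q ^ (δ - (n:ℝ)) :=
    Real.mul_rpow hr0.le hq0.le
  have h2 : r ^ (δ - (n:ℝ)) * (r ^ (n:ℕ)) = r ^ δ := by
    rw [← Real.rpow_natCast r n, ← Real.rpow_add hr0]
    ring_nf
  have h3 : q ^ (δ - (n:ℝ)) ≤ 2 ^ (n:ℕ) := by
    have : q ^ (δ - (n:ℝ)) ≤ q ^ (-(n:ℝ)) :=
      Real.rpow_le_rpow_of_exponent_ge hq0 (by norm_num [hq]) (by linarith)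
    refine this.trans_eq ?_
    rw [hq, Real.inv_rpow (by norm_num), ← Real.rpow_neg (by norm_num), neg_neg,
      Real.rpow_natCast]
  have h4 : r ^ δ = R ^ δ * ((2:ℝ)⁻¹ ^ δ) ^ k := by
    rw [hr, Real.mul_rpow hR.le hqk.le, ← Real.rpow_natCast q k, ← Real.rpow_mul hq0.le,
      mul_comm (k:ℝ) δ, Real.rpow_mul hq0.le, Real.rpow_natCast]
  calc (r * q) ^ (δ - (n:ℝ)) * r ^ (n:ℕ)
      = (r ^ (δ - (n:ℝ)) * r ^ (n:ℕ)) * q ^ (δ - (n:ℝ)) := by rw [h1']; ring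
    _ = r ^ δ * q ^ (δ - (n:ℝ)) := by rw [h2]
    _ ≤ r ^ δ * 2 ^ (n:ℕ) := by
        apply mul_le_mul_of_nonneg_left h3 (Real.rpow_nonneg hr0.le δ)
    _ = R ^ δ * 2 ^ (n:ℕ) * ((2:ℝ)⁻¹ ^ δ) ^ k := by rw [h4]; ring

lemma meas_norm_rpow {n : ℕ} (e : ℝ) :
    Measurable fun x : EuclideanSpace ℝ (Fin n) => ENNReal.ofReal (‖x‖ ^ e) :=
  (measurable_norm.pow_const e).ennreal_ofReal

lemma lintegral_cball_ub (n : ℕ) (hn : 1 ≤ n) {δ : ℝ} (h0 : 0 < δ) (h1 : δ < 1)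
    {R : ℝ} (hR : 0 < R) :
    ∫⁻ x in Metric.closedBall (0 : EuclideanSpace ℝ (Fin n)) R,
        ENNReal.ofReal (‖x‖ ^ (δ - (n:ℝ)))
      ≤ ENNReal.ofReal (R ^ δ * 2 ^ (n:ℕ) * (5/δ)) *
          volume (Metric.ball (0 : EuclideanSpace ℝ (Fin n)) 1) := by
  set E := EuclideanSpace ℝ (Fin n)
  set q : ℝ := (2:ℝ)⁻¹ with hq
  have hq0 : (0:ℝ) < q := by norm_num [hq]
  have hq1 : q < 1 := by norm_num [hq]
  set A : ℕ → Set E := fun k => {x : E | R * q ^ (k+1) < ‖x‖ ∧ ‖x‖ ≤ R * q ^ k} with hA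
  have hAm : ∀ k, MeasurableSet (A k) := fun k =>
    ((measurableSet_lt measurable_const measurable_norm).inter
      (measurableSet_le measurable_norm measurable_const))
  have hcover : Metric.closedBall (0 : E) R ⊆ {0} ∪ ⋃ k, A k := by
    intro x hx
    rcases eq_or_ne x 0 with hx0 | hx0
    · exact Or.inl hx0
    right
    have hxn : 0 < ‖x‖ := norm_pos_iff.mpr hx0
    have hxR : ‖x‖ ≤ R := by simpa [Metric.mem_closedBall, dist_zero_right] using hx
    have hex : ∃ k : ℕ, R * q ^ (k+1) < ‖x‖ := by
      obtain ⟨m, hm⟩ := exists_pow_lt_of_lt_one (div_pos hxn hR) hq1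
      refine ⟨m, ?_⟩
      have hmono : q ^ (m+1) ≤ q ^ m := pow_le_pow_of_le_one hq0.le hq1.le (Nat.le_succ m)
      have h2 : R * q ^ (m+1) ≤ R * q ^ m := by nlinarith
      have h3 : R * q ^ m < ‖x‖ := by
        have := (lt_div_iff₀ hR).mp hm
        linarith
      linarith
    set k := Nat.find hex with hk
    have hk1 : R * q ^ (k+1) < ‖x‖ := Nat.find_spec hex
    have hk2 : ‖x‖ ≤ R * q ^ k := by
      rcases Nat.eq_zero_or_pos k with h | h
      · simpa [h] using hxR
      · have := Nat.find_min hex (m := k - 1) (by omega)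
        push_neg at this
        have hkk : k - 1 + 1 = k := by omega
        rwa [hkk] at this
    exact Set.mem_iUnion.mpr ⟨k, hk1, hk2⟩
  calc ∫⁻ x in Metric.closedBall (0:E) R, ENNReal.ofReal (‖x‖ ^ (δ - (n:ℝ)))
      ≤ ∫⁻ x in ({0} ∪ ⋃ k, A k : Set E), ENNReal.ofReal (‖x‖ ^ (δ - (n:ℝ))) :=
        lintegral_mono_set hcover
    _ ≤ (∫⁻ x in ({0} : Set E), ENNReal.ofReal (‖x‖ ^ (δ - (n:ℝ))))
        + ∫⁻ x in (⋃ k, A k : Set E), ENNReal.ofReal (‖x‖ ^ (δ - (n:ℝ))) :=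
        lintegral_union_le _ _ _
    _ ≤ 0 + ∑' k, ∫⁻ x in A k, ENNReal.ofReal (‖x‖ ^ (δ - (n:ℝ))) := by
        gcongr
        · haveI : Nontrivial E := by
            refine ⟨0, EuclideanSpace.single ⟨0, hn⟩ 1, fun hcon => ?_⟩
            have := congrArg (fun v => v ⟨0, hn⟩) hcon.symm
            simp [EuclideanSpace.single_apply] at this
          rw [setLIntegral_measure_zero _ _ (measure_singleton 0)]
        · exact lintegral_iUnion_le _ _
    _ ≤ ∑' k : ℕ, ENNReal.ofReal (R ^ δ * 2 ^ (n:ℕ)) * ENNReal.ofReal (((2:ℝ)⁻¹ ^ δ)^k) *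
          volume (Metric.ball (0:E) 1) := by
        rw [zero_add]
        apply ENNReal.tsum_le_tsum
        intro k
        have hrk : (0:ℝ) < R * q ^ (k+1) := by positivity
        have hbound : ∀ x ∈ A k, ENNReal.ofReal (‖x‖ ^ (δ - (n:ℝ)))
            ≤ ENNReal.ofReal ((R * q ^ (k+1)) ^ (δ - (n:ℝ))) := by
          intro x hx
          exact ENNReal.ofReal_le_ofReal
            (Real.rpow_le_rpow_of_nonpos hrk hx.1.le (by
              have : (1:ℝ) ≤ (n:ℝ) := by exact_mod_cast hn
              linarith))
        calc ∫⁻ x in A k, ENNReal.ofReal (‖x‖ ^ (δ - (n:ℝ)))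
            ≤ ∫⁻ _x in A k, ENNReal.ofReal ((R * q ^ (k+1)) ^ (δ - (n:ℝ))) :=
              setLIntegral_mono' (hAm k) hbound
          _ = ENNReal.ofReal ((R * q ^ (k+1)) ^ (δ - (n:ℝ))) * volume (A k) :=
              setLIntegral_const _ _
          _ ≤ ENNReal.ofReal ((R * q ^ (k+1)) ^ (δ - (n:ℝ))) *
              (ENNReal.ofReal ((R * q ^ k) ^ (n:ℕ)) * volume (Metric.ball (0:E) 1)) := by
              gcongr
              have hsub : A k ⊆ Metric.closedBall (0:E) (R * q ^ k) := by
                intro x hx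
                simpa [Metric.mem_closedBall, dist_zero_right] using hx.2
              calc volume (A k) ≤ volume (Metric.closedBall (0:E) (R * q ^ k)) :=
                    measure_mono hsub
                _ = ENNReal.ofReal ((R * q ^ k) ^ Module.finrank ℝ E) *
                    volume (Metric.ball (0:E) 1) :=
                    Measure.addHaar_closedBall _ _ (by positivity)
                _ = ENNReal.ofReal ((R * q ^ k) ^ (n:ℕ)) * volume (Metric.ball (0:E) 1) := by
                    rw [finrank_euclideanSpace_fin]
          _ ≤ ENNReal.ofReal (R ^ δ * 2 ^ (n:ℕ)) * ENNReal.ofReal (((2:ℝ)⁻¹ ^ δ)^k) *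
              volume (Metric.ball (0:E) 1) := by
              rw [← mul_assoc]
              apply mul_le_mul_left
              rw [← ENNReal.ofReal_mul (by positivity), ← ENNReal.ofReal_mul (by positivity)]
              exact ENNReal.ofReal_le_ofReal (annulus_real_est n h0 h1 hR k)
    _ = ENNReal.ofReal (R ^ δ * 2 ^ (n:ℕ)) * (∑' k : ℕ, ENNReal.ofReal (((2:ℝ)⁻¹ ^ δ)^k)) *
          volume (Metric.ball (0:E) 1) := by
        rw [ENNReal.tsum_mul_right, ENNReal.tsum_mul_left]
    _ ≤ ENNReal.ofReal (R ^ δ * 2 ^ (n:ℕ)) * ENNReal.ofReal (5/δ) *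
          volume (Metric.ball (0:E) 1) := by
        gcongr
        exact geom_ub h0 h1
    _ = ENNReal.ofReal (R ^ δ * 2 ^ (n:ℕ) * (5/δ)) * volume (Metric.ball (0:E) 1) := by
        rw [← ENNReal.ofReal_mul (by positivity)]

lemma lintegral_unitbox_lb (n : ℕ) (hn : 1 ≤ n) {δ : ℝ} (h0 : 0 < δ) (h1 : δ < 1) :
    ENNReal.ofReal ((Real.sqrt n) ^ (-(n:ℝ)) * 2⁻¹ * δ⁻¹)
      ≤ ∫⁻ x in BoxE n 0 1, ENNReal.ofReal (‖x‖ ^ (δ - (n:ℝ))) := by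
  set E := EuclideanSpace ℝ (Fin n)
  set q : ℝ := (2:ℝ)⁻¹ with hq
  have hq0 : (0:ℝ) < q := by norm_num [hq]
  have hq1 : q < 1 := by norm_num [hq]
  have hn1 : (1:ℝ) ≤ (n:ℝ) := by exact_mod_cast hn
  have hsn : (1:ℝ) ≤ Real.sqrt n := by
    rw [show (1:ℝ) = Real.sqrt 1 by simp]
    exact Real.sqrt_le_sqrt hn1
  set S : ℕ → Set E := fun k => BoxE n 0 (fun _ => q ^ k) \ BoxE n 0 (fun _ => q ^ (k+1)) with hS
  have hSm : ∀ k, MeasurableSet (S k) := fun k =>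
    (boxE_measurable n 0 _).diff (boxE_measurable n 0 _)
  have hmono : ∀ {s t : ℝ}, s ≤ t → BoxE n 0 (fun _ => s) ⊆ BoxE n 0 (fun _ => t) := by
    intro s t hst x hx i
    exact ⟨(hx i).1, (hx i).2.trans hst⟩
  have hdisj : Pairwise (Function.onFun Disjoint S) := by
    rw [pairwise_disjoint_on]
    intro j k hjk
    rw [Set.disjoint_left]
    intro x hxj hxk
    have h1 : BoxE n 0 (fun _ => q ^ k) ⊆ BoxE n 0 (fun _ => q ^ (j+1)) :=
      hmono (pow_le_pow_of_le_one hq0.le hq1.le hjk)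
    exact hxj.2 (h1 hxk.1)
  have hsub : (⋃ k, S k) ⊆ BoxE n 0 1 := by
    intro x hx
    obtain ⟨k, hk⟩ := Set.mem_iUnion.mp hx
    exact hmono (pow_le_one₀ hq0.le hq1.le) hk.1
  have hvol : ∀ k, ENNReal.ofReal ((q ^ k) ^ (n:ℕ) * 2⁻¹) ≤ volume (S k) := by
    intro k
    have hb : volume (BoxE n 0 (fun _ => q ^ (k+1))) = ENNReal.ofReal ((q ^ (k+1)) ^ (n:ℕ)) := by
      rw [volume_boxE]
      simp only [Pi.zero_apply, sub_zero]
      rw [Finset.prod_const, ← ENNReal.ofReal_pow (by positivity)]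
      simp
    have ha : volume (BoxE n 0 (fun _ => q ^ k)) = ENNReal.ofReal ((q ^ k) ^ (n:ℕ)) := by
      rw [volume_boxE]
      simp only [Pi.zero_apply, sub_zero]
      rw [Finset.prod_const, ← ENNReal.ofReal_pow (by positivity)]
      simp
    rw [hS]
    simp only
    rw [measure_diff (hmono (pow_le_pow_of_le_one hq0.le hq1.le (Nat.le_succ k)))
      (boxE_measurable n 0 _).nullMeasurableSet (by rw [hb]; exact ENNReal.ofReal_ne_top)]
    rw [ha, hb, ← ENNReal.ofReal_sub _ (by positivity)]
    apply ENNReal.ofReal_le_ofReal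
    have hqn : q ^ (n:ℕ) ≤ 2⁻¹ := by
      calc q ^ (n:ℕ) ≤ q ^ (1:ℕ) := pow_le_pow_of_le_one hq0.le hq1.le hn
        _ = q := pow_one q
    have : (q ^ (k+1)) ^ (n:ℕ) = (q ^ k) ^ (n:ℕ) * q ^ (n:ℕ) := by
      rw [pow_succ, mul_pow]
    rw [this]
    have hpos : (0:ℝ) < (q ^ k) ^ (n:ℕ) := by positivity
    nlinarith [mul_le_mul_of_nonneg_left hqn hpos.le]
  have hpt : ∀ k, ∀ x ∈ S k,
      ENNReal.ofReal ((Real.sqrt n * q ^ k) ^ (δ - (n:ℝ))) ≤ ENNReal.ofReal (‖x‖ ^ (δ - (n:ℝ))) := by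
    intro k x hx
    apply ENNReal.ofReal_le_ofReal
    have hxpos : 0 < ‖x‖ := by
      rcases eq_or_ne x 0 with h | h
      · exfalso
        apply hx.2
        intro i
        have hxi : x i = 0 := by rw [h]; rfl
        simp only [Pi.zero_apply, hxi]
        exact ⟨le_refl 0, by positivity⟩
      · exact norm_pos_iff.mpr h
    have hxle : ‖x‖ ≤ Real.sqrt n * q ^ k := by
      apply norm_le_of_coords x _ (by positivity)
      intro i
      rw [abs_le]
      constructor
      · have := (hx.1 i).1; simp only [Pi.zero_apply] at this; linarith [pow_pos hq0 k]
      · exact (hx.1 i).2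
    exact Real.rpow_le_rpow_of_nonpos hxpos hxle (by linarith)
  have hest : ∀ k : ℕ, (Real.sqrt n) ^ (-(n:ℝ)) * 2⁻¹ * ((2:ℝ)⁻¹ ^ δ) ^ k
      ≤ (Real.sqrt n * q ^ k) ^ (δ - (n:ℝ)) * ((q ^ k) ^ (n:ℕ) * 2⁻¹) := by
    intro k
    have hqk : (0:ℝ) < q ^ k := by positivity
    have e1 : (Real.sqrt n * q ^ k) ^ (δ - (n:ℝ))
        = (Real.sqrt n) ^ (δ - (n:ℝ)) * (q ^ k) ^ (δ - (n:ℝ)) :=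
      Real.mul_rpow (by positivity) hqk.le
    have e2 : (q ^ k) ^ (δ - (n:ℝ)) * (q ^ k) ^ (n:ℕ) = ((2:ℝ)⁻¹ ^ δ) ^ k := by
      rw [← Real.rpow_natCast (q ^ k) n, ← Real.rpow_add hqk, sub_add_cancel,
        ← Real.rpow_natCast q k, ← Real.rpow_mul hq0.le, mul_comm (k:ℝ) δ,
        Real.rpow_mul hq0.le, Real.rpow_natCast]
    have e3 : (Real.sqrt n) ^ (-(n:ℝ)) ≤ (Real.sqrt n) ^ (δ - (n:ℝ)) :=
      Real.rpow_le_rpow_of_exponent_le hsn (by linarith)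
    calc (Real.sqrt n) ^ (-(n:ℝ)) * 2⁻¹ * ((2:ℝ)⁻¹ ^ δ) ^ k
        ≤ (Real.sqrt n) ^ (δ - (n:ℝ)) * 2⁻¹ * ((2:ℝ)⁻¹ ^ δ) ^ k := by
          have hg : (0:ℝ) ≤ ((2:ℝ)⁻¹ ^ δ) ^ k := by positivity
          nlinarith [Real.rpow_nonneg (Real.sqrt_nonneg (n:ℝ)) (-(n:ℝ))]
      _ = (Real.sqrt n * q ^ k) ^ (δ - (n:ℝ)) * ((q ^ k) ^ (n:ℕ) * 2⁻¹) := by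
          rw [e1, ← e2]; ring
  calc ENNReal.ofReal ((Real.sqrt n) ^ (-(n:ℝ)) * 2⁻¹ * δ⁻¹)
      = ENNReal.ofReal ((Real.sqrt n) ^ (-(n:ℝ)) * 2⁻¹) * ENNReal.ofReal δ⁻¹ := by
        rw [← ENNReal.ofReal_mul (by positivity)]
    _ ≤ ENNReal.ofReal ((Real.sqrt n) ^ (-(n:ℝ)) * 2⁻¹) *
          ∑' k : ℕ, ENNReal.ofReal (((2:ℝ)⁻¹ ^ δ)^k) :=
        mul_le_mul_right (geom_lb h0 h1) _
    _ = ∑' k : ℕ, ENNReal.ofReal ((Real.sqrt n) ^ (-(n:ℝ)) * 2⁻¹ * ((2:ℝ)⁻¹ ^ δ)^k) := by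
        rw [← ENNReal.tsum_mul_left]
        congr 1
        funext k
        rw [← ENNReal.ofReal_mul (by positivity)]
    _ ≤ ∑' k : ℕ, ∫⁻ x in S k, ENNReal.ofReal (‖x‖ ^ (δ - (n:ℝ))) := by
        apply ENNReal.tsum_le_tsum
        intro k
        calc ENNReal.ofReal ((Real.sqrt n) ^ (-(n:ℝ)) * 2⁻¹ * ((2:ℝ)⁻¹ ^ δ)^k)
            ≤ ENNReal.ofReal ((Real.sqrt n * q ^ k) ^ (δ - (n:ℝ)) * ((q ^ k) ^ (n:ℕ) * 2⁻¹)) :=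
              ENNReal.ofReal_le_ofReal (hest k)
          _ = ENNReal.ofReal ((Real.sqrt n * q ^ k) ^ (δ - (n:ℝ))) *
              ENNReal.ofReal ((q ^ k) ^ (n:ℕ) * 2⁻¹) := ENNReal.ofReal_mul (by positivity)
          _ ≤ ENNReal.ofReal ((Real.sqrt n * q ^ k) ^ (δ - (n:ℝ))) * volume (S k) :=
              mul_le_mul_right (hvol k) _
          _ = ∫⁻ _x in S k, ENNReal.ofReal ((Real.sqrt n * q ^ k) ^ (δ - (n:ℝ))) :=
              (setLIntegral_const _ _).symm
          _ ≤ ∫⁻ x in S k, ENNReal.ofReal (‖x‖ ^ (δ - (n:ℝ))) :=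
              setLIntegral_mono' (hSm k) (hpt k)
    _ = ∫⁻ x in ⋃ k, S k, ENNReal.ofReal (‖x‖ ^ (δ - (n:ℝ))) :=
        (lintegral_iUnion hSm hdisj _).symm
    _ ≤ ∫⁻ x in BoxE n 0 1, ENNReal.ofReal (‖x‖ ^ (δ - (n:ℝ))) :=
        lintegral_mono_set hsub

lemma caseA_real (n : ℕ) (hn : 1 ≤ n) {p δ h κ : ℝ} (hp : 1 < p) (h0 : 0 < δ) (h1 : δ < 1)
    (hh : 0 < h) (hκ : 0 < κ) :
    (3*Real.sqrt n*h) ^ (((n:ℝ)-δ)*(p-1)) *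
      ((h^(n:ℕ))⁻¹ * ((3*Real.sqrt n*h)^δ * 2^(n:ℕ) * (5/δ) * κ)) ^ (p-1)
      ≤ ((3*Real.sqrt n)^((n:ℝ)*(p-1)) * ((2:ℝ)^(n:ℕ)*5*κ)^(p-1)) * δ^(1-p) := by
  have hn1 : (1:ℝ) ≤ (n:ℝ) := by exact_mod_cast hn
  have hsn : (1:ℝ) ≤ Real.sqrt n := by
    rw [show (1:ℝ) = Real.sqrt 1 by simp]
    exact Real.sqrt_le_sqrt hn1
  set s : ℝ := 3*Real.sqrt n with hs
  have hs0 : (0:ℝ) < s := by positivity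
  have hM0 : (0:ℝ) < s*h := by positivity
  set u : ℝ := p - 1 with hu
  have hu0 : (0:ℝ) < u := by rw [hu]; linarith
  have hinv : (h^(n:ℕ))⁻¹ = h ^ (-(n:ℝ)) := by
    rw [← Real.rpow_natCast h n, ← Real.rpow_neg hh.le]
  have hA0 : (0:ℝ) < (s*h)^δ := Real.rpow_pos_of_pos hM0 δ
  have hB0 : (0:ℝ) < h ^ (-(n:ℝ)) := Real.rpow_pos_of_pos hh _
  have hK0 : (0:ℝ) < (2:ℝ)^(n:ℕ)*5*κ := by positivity
  have hX : (h^(n:ℕ))⁻¹ * ((s*h)^δ * 2^(n:ℕ) * (5/δ) * κ)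
      = (s*h)^δ * h ^ (-(n:ℝ)) * ((2:ℝ)^(n:ℕ)*5*κ) * δ⁻¹ := by
    rw [hinv]; field_simp
  rw [hX]
  set A : ℝ := (s*h)^δ with hAdef
  set B : ℝ := h ^ (-(n:ℝ)) with hBdef
  set K : ℝ := (2:ℝ)^(n:ℕ)*5*κ with hKdef
  have hsplit : (A*B*K*δ⁻¹)^u = A^u*B^u*K^u*(δ⁻¹)^u := by
    rw [Real.mul_rpow (by positivity) (by positivity),
        Real.mul_rpow (by positivity) (by positivity),
        Real.mul_rpow (by positivity) (by positivity)]
  have eA : A^u = (s*h)^(δ*u) := by rw [hAdef, ← Real.rpow_mul hM0.le]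
  have eB : B^u = h^(-(n:ℝ)*u) := by rw [hBdef, ← Real.rpow_mul hh.le]
  have eδ : (δ⁻¹)^u = δ^(1-p) := by
    rw [← Real.rpow_neg_one δ, ← Real.rpow_mul h0.le]
    congr 1
    rw [hu]; ring
  have eM : (s*h)^(((n:ℝ)-δ)*u) * (s*h)^(δ*u) = (s*h)^((n:ℝ)*u) := by
    rw [← Real.rpow_add hM0]; congr 1; ring
  have eMs : (s*h)^((n:ℝ)*u) = s^((n:ℝ)*u) * h^((n:ℝ)*u) := Real.mul_rpow hs0.le hh.le
  have eh : h^((n:ℝ)*u) * h^(-(n:ℝ)*u) = 1 := by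
    rw [← Real.rpow_add hh]; norm_num
  calc (s*h) ^ (((n:ℝ)-δ)*u) * (A*B*K*δ⁻¹)^u
      = ((s*h)^(((n:ℝ)-δ)*u) * (s*h)^(δ*u)) * h^(-(n:ℝ)*u) * K^u * δ^(1-p) := by
        rw [hsplit, eA, eB, eδ]; ring
    _ = s^((n:ℝ)*u) * (h^((n:ℝ)*u) * h^(-(n:ℝ)*u)) * K^u * δ^(1-p) := by
        rw [eM, eMs]; ring
    _ = s^((n:ℝ)*u) * K^u * δ^(1-p) := by rw [eh]; ring
    _ ≤ s^((n:ℝ)*u) * K^u * δ^(1-p) := le_refl _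

lemma caseB_real (n : ℕ) (hn : 1 ≤ n) {p δ m : ℝ} (hp : 1 < p) (h0 : 0 < δ) (h1 : δ < 1)
    (hm : 0 < m) :
    (3/2*m) ^ (((n:ℝ)-δ)*(p-1)) * ((m/2) ^ (δ-(n:ℝ))) ^ (p-1)
      ≤ (3:ℝ)^((n:ℝ)*(p-1)) := by
  have hn1 : (1:ℝ) ≤ (n:ℝ) := by exact_mod_cast hn
  set β : ℝ := ((n:ℝ)-δ)*(p-1) with hβ
  have hβ0 : (0:ℝ) ≤ β := by
    apply mul_nonneg <;> nlinarith
  have e1 : ((m/2) ^ (δ-(n:ℝ))) ^ (p-1) = (m/2) ^ (-β) := by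
    rw [← Real.rpow_mul (by positivity)]
    congr 1; rw [hβ]; ring
  rw [e1]
  have hmβ : (0:ℝ) < m^β := Real.rpow_pos_of_pos hm β
  have hcβ : (0:ℝ) < (2:ℝ)⁻¹^β := Real.rpow_pos_of_pos (by norm_num) β
  have e2 : (3/2*m) ^ β = (3/2:ℝ)^β * m^β := Real.mul_rpow (by norm_num) hm.le
  have e3 : (m/2:ℝ) ^ (-β) = (m^β * (2:ℝ)⁻¹^β)⁻¹ := by
    rw [Real.rpow_neg (by positivity)]
    congr 1
    rw [div_eq_mul_inv, Real.mul_rpow hm.le (by norm_num)]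
  have e4 : (3/2:ℝ)^β * ((2:ℝ)⁻¹^β)⁻¹ = (3:ℝ)^β := by
    rw [Real.inv_rpow (by norm_num), inv_inv, ← Real.mul_rpow (by norm_num) (by norm_num)]
    norm_num
  calc (3/2*m) ^ β * (m/2) ^ (-β)
      = ((3/2:ℝ)^β * ((2:ℝ)⁻¹^β)⁻¹) * (m^β * (m^β)⁻¹) := by
        rw [e2, e3, mul_inv]; ring
    _ = (3:ℝ)^β := by rw [e4, mul_inv_cancel₀ hmβ.ne', mul_one]
    _ ≤ (3:ℝ)^((n:ℝ)*(p-1)) := by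
        apply Real.rpow_le_rpow_of_exponent_le (by norm_num)
        rw [hβ]; nlinarith

lemma setAvgE_le {n : ℕ} {Q : Set (EuclideanSpace ℝ (Fin n))}
    {f : EuclideanSpace ℝ (Fin n) → ℝ} {B : ℝ≥0∞}
    (hQ0 : volume Q ≠ 0) (hQt : volume Q ≠ ⊤)
    (h : ∫⁻ x in Q, ENNReal.ofReal (f x) ≤ volume Q * B) : setAvgE n Q f ≤ B := by
  rw [setAvgE]
  calc (volume Q)⁻¹ * ∫⁻ x in Q, ENNReal.ofReal (f x)
      ≤ (volume Q)⁻¹ * (volume Q * B) := mul_le_mul_right h _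
    _ = B := by rw [← mul_assoc, ENNReal.inv_mul_cancel hQ0 hQt, one_mul]

set_option maxHeartbeats 2000000 in
/-- For `n ≥ 1` and `1 < p < ∞` there are constants `0 < c < C`, depending
only on `n` and `p`, such that for every `0 < δ < 1` the power weight
`w(x) = |x|^{(n-δ)(p-1)}` satisfies `c δ^{1-p} ≤ [w]_{A_p} ≤ C δ^{1-p}`; in particular
`w ∈ A_p`. -/
theorem power_weight_Ap_constant (n : ℕ) (hn : 1 ≤ n) (p : ℝ) (hp : 1 < p) :
    ∃ c C : ℝ, 0 < c ∧ c < C ∧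
      ∀ δ : ℝ, 0 < δ → δ < 1 →
        ENNReal.ofReal (c * δ ^ (1 - p)) ≤
          ApConstE n p (fun x => ‖x‖ ^ (((n : ℝ) - δ) * (p - 1))) ∧
        ApConstE n p (fun x => ‖x‖ ^ (((n : ℝ) - δ) * (p - 1))) ≤
          ENNReal.ofReal (C * δ ^ (1 - p)) ∧
        ApConstE n p (fun x => ‖x‖ ^ (((n : ℝ) - δ) * (p - 1))) < ⊤ := by
  classical
  have hn1 : (1:ℝ) ≤ (n:ℝ) := by exact_mod_cast hn
  have hsn : (1:ℝ) ≤ Real.sqrt n := by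
    rw [show (1:ℝ) = Real.sqrt 1 by simp]
    exact Real.sqrt_le_sqrt hn1
  have hp1 : (0:ℝ) < p - 1 := by linarith
  have hpne : p - (1:ℝ) ≠ 0 := ne_of_gt hp1
  set κ : ℝ := (volume (Metric.ball (0 : EuclideanSpace ℝ (Fin n)) 1)).toReal with hκdef
  have hvBne : volume (Metric.ball (0 : EuclideanSpace ℝ (Fin n)) 1) ≠ ⊤ :=
    measure_ball_lt_top.ne
  have hκeq : volume (Metric.ball (0 : EuclideanSpace ℝ (Fin n)) 1) = ENNReal.ofReal κ :=
    (ENNReal.ofReal_toReal hvBne).symm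
  have hκpos : 0 < κ :=
    ENNReal.toReal_pos (Metric.measure_ball_pos volume (0 : EuclideanSpace ℝ (Fin n)) one_pos).ne'
      hvBne
  set cL : ℝ := (Real.sqrt n) ^ (-(n:ℝ)) * 2⁻¹ with hcL
  have hcL0 : 0 < cL := by
    rw [hcL]; positivity
  set c : ℝ := ((2:ℝ)⁻¹ ^ ((n:ℝ)*(p-1)) * 2⁻¹) * cL^(p-1) with hc
  have hc0 : 0 < c := by
    rw [hc]; positivity
  set CA : ℝ := (3*Real.sqrt n)^((n:ℝ)*(p-1)) * ((2:ℝ)^(n:ℕ)*5*κ)^(p-1) with hCA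
  have hCA0 : 0 < CA := by rw [hCA]; positivity
  set CB : ℝ := (3:ℝ)^((n:ℝ)*(p-1)) with hCB
  have hCB0 : 0 < CB := by rw [hCB]; positivity
  refine ⟨c, CA + CB + c + 1, hc0, by linarith, ?_⟩
  intro δ hδ0 hδ1
  have hδn : 0 < (n:ℝ) - δ := by linarith
  have hβ0 : 0 < ((n:ℝ) - δ) * (p-1) := mul_pos hδn hp1
  have hδp : (0:ℝ) < δ^(1-p) := Real.rpow_pos_of_pos hδ0 _
  have hδp1 : (1:ℝ) ≤ δ^(1-p) :=
    Real.one_le_rpow_of_pos_of_le_one_of_nonpos hδ0 hδ1.le (by linarith)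
  have hσeq : (fun x : EuclideanSpace ℝ (Fin n) =>
      (‖x‖ ^ (((n:ℝ) - δ) * (p - 1))) ^ (-(p - 1)⁻¹)) =
      fun x : EuclideanSpace ℝ (Fin n) => ‖x‖ ^ (δ - (n:ℝ)) := by
    funext x
    rw [← Real.rpow_mul (norm_nonneg x)]
    congr 1
    field_simp
    ring
  -- upper bound for an arbitrary cube
  have key : ∀ (a : Fin n → ℝ) (h : ℝ), 0 < h →
      setAvgE n (CubeE n a h) (fun x => ‖x‖ ^ (((n:ℝ) - δ) * (p - 1))) *
        (setAvgE n (CubeE n a h)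
          (fun x => (‖x‖ ^ (((n:ℝ) - δ) * (p - 1))) ^ (-(p - 1)⁻¹))) ^ (p - 1)
        ≤ ENNReal.ofReal ((CA + CB + c + 1) * δ ^ (1 - p)) := by
    intro a h hh
    have hQm : MeasurableSet (CubeE n a h) := boxE_measurable n a _
    have hQv : volume (CubeE n a h) = ENNReal.ofReal (h ^ (n:ℕ)) := by
      rw [show CubeE n a h = BoxE n a (fun i => a i + h) from rfl, volume_boxE]
      simp only [add_sub_cancel_left]
      rw [Finset.prod_const, Finset.card_univ, Fintype.card_fin,
        ← ENNReal.ofReal_pow hh.le]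
    have hQ0 : volume (CubeE n a h) ≠ 0 := by
      rw [hQv]; exact (ENNReal.ofReal_pos.mpr (by positivity)).ne'
    have hQt : volume (CubeE n a h) ≠ ⊤ := by rw [hQv]; exact ENNReal.ofReal_ne_top
    rw [hσeq]
    set a' : EuclideanSpace ℝ (Fin n) := (WithLp.equiv 2 (Fin n → ℝ)).symm a with ha'
    have hsubn : ∀ x ∈ CubeE n a h, ‖x - a'‖ ≤ Real.sqrt n * h := by
      intro x hx
      apply norm_le_of_coords _ _ hh.le
      intro i
      have hxi : a i ≤ x i ∧ x i ≤ a i + h := hx i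
      have hco : (x - a') i = x i - a i := by rw [PiLp.sub_apply]; rfl
      rw [hco, abs_le]
      constructor <;> linarith [hxi.1, hxi.2]
    have hub : ∀ x ∈ CubeE n a h, ‖x‖ ≤ ‖a'‖ + Real.sqrt n * h := by
      intro x hx
      have h1 : ‖x‖ ≤ ‖a'‖ + ‖x - a'‖ := by
        calc ‖x‖ = ‖a' + (x - a')‖ := by rw [add_sub_cancel]
          _ ≤ ‖a'‖ + ‖x - a'‖ := norm_add_le _ _
      linarith [hsubn x hx]
    rcases le_or_gt ‖a'‖ (2*Real.sqrt n*h) with hsmall | hbig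
    · -- cube near the origin
      have hM0 : (0:ℝ) < 3*Real.sqrt n*h := by positivity
      have hxM : ∀ x ∈ CubeE n a h, ‖x‖ ≤ 3*Real.sqrt n*h := by
        intro x hx
        have := hub x hx
        nlinarith
      have hA1 : setAvgE n (CubeE n a h) (fun x => ‖x‖ ^ (((n:ℝ) - δ) * (p - 1)))
          ≤ ENNReal.ofReal ((3*Real.sqrt n*h) ^ (((n:ℝ) - δ) * (p - 1))) := by
        apply setAvgE_le hQ0 hQt
        calc ∫⁻ x in CubeE n a h, ENNReal.ofReal (‖x‖ ^ (((n:ℝ) - δ) * (p - 1)))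
            ≤ ∫⁻ _x in CubeE n a h,
                ENNReal.ofReal ((3*Real.sqrt n*h) ^ (((n:ℝ) - δ) * (p - 1))) :=
              setLIntegral_mono' hQm (fun x hx => ENNReal.ofReal_le_ofReal
                (Real.rpow_le_rpow (norm_nonneg x) (hxM x hx) hβ0.le))
          _ = ENNReal.ofReal ((3*Real.sqrt n*h) ^ (((n:ℝ) - δ) * (p - 1))) *
              volume (CubeE n a h) := setLIntegral_const _ _
          _ = volume (CubeE n a h) *
              ENNReal.ofReal ((3*Real.sqrt n*h) ^ (((n:ℝ) - δ) * (p - 1))) := mul_comm _ _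
      have hQball : CubeE n a h ⊆ Metric.closedBall 0 (3*Real.sqrt n*h) := by
        intro x hx
        simpa [Metric.mem_closedBall, dist_zero_right] using hxM x hx
      have hA2 : setAvgE n (CubeE n a h) (fun x => ‖x‖ ^ (δ - (n:ℝ)))
          ≤ ENNReal.ofReal
            ((h^(n:ℕ))⁻¹ * ((3*Real.sqrt n*h)^δ * 2^(n:ℕ) * (5/δ) * κ)) := by
        rw [setAvgE, hQv]
        calc (ENNReal.ofReal (h ^ (n:ℕ)))⁻¹ *
              ∫⁻ x in CubeE n a h, ENNReal.ofReal (‖x‖ ^ (δ - (n:ℝ)))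
            ≤ (ENNReal.ofReal (h ^ (n:ℕ)))⁻¹ *
              (ENNReal.ofReal ((3*Real.sqrt n*h)^δ * 2^(n:ℕ) * (5/δ)) *
                volume (Metric.ball (0 : EuclideanSpace ℝ (Fin n)) 1)) := by
              apply mul_le_mul_right
              exact (lintegral_mono_set hQball).trans
                (lintegral_cball_ub n hn hδ0 hδ1 hM0)
          _ = ENNReal.ofReal ((h ^ (n:ℕ))⁻¹) *
              (ENNReal.ofReal ((3*Real.sqrt n*h)^δ * 2^(n:ℕ) * (5/δ)) *
                ENNReal.ofReal κ) := by
              rw [hκeq, ENNReal.ofReal_inv_of_pos (by positivity)]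
          _ = ENNReal.ofReal
              ((h^(n:ℕ))⁻¹ * ((3*Real.sqrt n*h)^δ * 2^(n:ℕ) * (5/δ) * κ)) := by
              rw [← ENNReal.ofReal_mul (by positivity), ← ENNReal.ofReal_mul (by positivity)]
      calc setAvgE n (CubeE n a h) (fun x => ‖x‖ ^ (((n:ℝ) - δ) * (p - 1))) *
            (setAvgE n (CubeE n a h) (fun x => ‖x‖ ^ (δ - (n:ℝ)))) ^ (p - 1)
          ≤ ENNReal.ofReal ((3*Real.sqrt n*h) ^ (((n:ℝ) - δ) * (p - 1))) *
            (ENNReal.ofReal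
              ((h^(n:ℕ))⁻¹ * ((3*Real.sqrt n*h)^δ * 2^(n:ℕ) * (5/δ) * κ))) ^ (p - 1) :=
            mul_le_mul' hA1 (ENNReal.rpow_le_rpow hA2 hp1.le)
        _ = ENNReal.ofReal ((3*Real.sqrt n*h) ^ (((n:ℝ) - δ) * (p - 1)) *
              ((h^(n:ℕ))⁻¹ * ((3*Real.sqrt n*h)^δ * 2^(n:ℕ) * (5/δ) * κ)) ^ (p - 1)) := by
            rw [ENNReal.ofReal_rpow_of_nonneg (by positivity) hp1.le,
              ← ENNReal.ofReal_mul (by positivity)]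
        _ ≤ ENNReal.ofReal ((CA + CB + c + 1) * δ ^ (1 - p)) := by
            apply ENNReal.ofReal_le_ofReal
            have hkey := caseA_real n hn hp hδ0 hδ1 hh hκpos
            rw [← hCA] at hkey
            nlinarith [hδp.le, hc0.le, hCB0.le]
    · -- cube far from the origin
      have hm0 : (0:ℝ) < ‖a'‖ := by
        have : (0:ℝ) < 2*Real.sqrt n*h := by positivity
        linarith
      have hlo : ∀ x ∈ CubeE n a h, ‖a'‖/2 ≤ ‖x‖ := by
        intro x hx
        have h1 : ‖a'‖ - ‖x‖ ≤ ‖x - a'‖ := by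
          rw [norm_sub_rev]; exact norm_sub_norm_le a' x
        have := hsubn x hx
        nlinarith
      have hhi : ∀ x ∈ CubeE n a h, ‖x‖ ≤ 3/2*‖a'‖ := by
        intro x hx
        have := hub x hx
        nlinarith
      have hA1 : setAvgE n (CubeE n a h) (fun x => ‖x‖ ^ (((n:ℝ) - δ) * (p - 1)))
          ≤ ENNReal.ofReal ((3/2*‖a'‖) ^ (((n:ℝ) - δ) * (p - 1))) := by
        apply setAvgE_le hQ0 hQt
        calc ∫⁻ x in CubeE n a h, ENNReal.ofReal (‖x‖ ^ (((n:ℝ) - δ) * (p - 1)))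
            ≤ ∫⁻ _x in CubeE n a h,
                ENNReal.ofReal ((3/2*‖a'‖) ^ (((n:ℝ) - δ) * (p - 1))) :=
              setLIntegral_mono' hQm (fun x hx => ENNReal.ofReal_le_ofReal
                (Real.rpow_le_rpow (norm_nonneg x) (hhi x hx) hβ0.le))
          _ = ENNReal.ofReal ((3/2*‖a'‖) ^ (((n:ℝ) - δ) * (p - 1))) *
              volume (CubeE n a h) := setLIntegral_const _ _
          _ = volume (CubeE n a h) *
              ENNReal.ofReal ((3/2*‖a'‖) ^ (((n:ℝ) - δ) * (p - 1))) := mul_comm _ _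
      have hA2 : setAvgE n (CubeE n a h) (fun x => ‖x‖ ^ (δ - (n:ℝ)))
          ≤ ENNReal.ofReal ((‖a'‖/2) ^ (δ - (n:ℝ))) := by
        apply setAvgE_le hQ0 hQt
        calc ∫⁻ x in CubeE n a h, ENNReal.ofReal (‖x‖ ^ (δ - (n:ℝ)))
            ≤ ∫⁻ _x in CubeE n a h, ENNReal.ofReal ((‖a'‖/2) ^ (δ - (n:ℝ))) :=
              setLIntegral_mono' hQm (fun x hx => ENNReal.ofReal_le_ofReal
                (Real.rpow_le_rpow_of_nonpos (by positivity) (hlo x hx) (by linarith)))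
          _ = ENNReal.ofReal ((‖a'‖/2) ^ (δ - (n:ℝ))) * volume (CubeE n a h) :=
              setLIntegral_const _ _
          _ = volume (CubeE n a h) * ENNReal.ofReal ((‖a'‖/2) ^ (δ - (n:ℝ))) := mul_comm _ _
      calc setAvgE n (CubeE n a h) (fun x => ‖x‖ ^ (((n:ℝ) - δ) * (p - 1))) *
            (setAvgE n (CubeE n a h) (fun x => ‖x‖ ^ (δ - (n:ℝ)))) ^ (p - 1)
          ≤ ENNReal.ofReal ((3/2*‖a'‖) ^ (((n:ℝ) - δ) * (p - 1))) *
            (ENNReal.ofReal ((‖a'‖/2) ^ (δ - (n:ℝ)))) ^ (p - 1) :=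
            mul_le_mul' hA1 (ENNReal.rpow_le_rpow hA2 hp1.le)
        _ = ENNReal.ofReal ((3/2*‖a'‖) ^ (((n:ℝ) - δ) * (p - 1)) *
              ((‖a'‖/2) ^ (δ - (n:ℝ))) ^ (p - 1)) := by
            rw [ENNReal.ofReal_rpow_of_nonneg (by positivity) hp1.le,
              ← ENNReal.ofReal_mul (by positivity)]
        _ ≤ ENNReal.ofReal ((CA + CB + c + 1) * δ ^ (1 - p)) := by
            apply ENNReal.ofReal_le_ofReal
            have hkey := caseB_real n hn hp hδ0 hδ1 hm0
            rw [← hCB] at hkey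
            nlinarith [hδp1, hCA0.le, hc0.le, hCB0.le]
  -- lower bound at the unit cube
  have hQ1box : CubeE n 0 1 = BoxE n 0 1 := by
    ext x
    constructor
    · intro hx i
      have := hx i
      simp only [Pi.zero_apply, Pi.one_apply] at this ⊢
      constructor <;> linarith [this.1, this.2]
    · intro hx i
      have := hx i
      simp only [Pi.zero_apply, Pi.one_apply] at this ⊢
      constructor <;> linarith [this.1, this.2]
  have hQV : volume (CubeE n 0 1) = 1 := by
    rw [hQ1box, volume_boxE]
    simp
  have hi0 : (⟨0, hn⟩ : Fin n) = ⟨0, hn⟩ := rfl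
  have hA1low : ENNReal.ofReal ((2:ℝ)⁻¹ ^ ((n:ℝ)*(p-1)) * 2⁻¹)
      ≤ setAvgE n (CubeE n 0 1) (fun x => ‖x‖ ^ (((n:ℝ) - δ) * (p - 1))) := by
    rw [setAvgE, hQV, inv_one, one_mul]
    set i0 : Fin n := ⟨0, hn⟩ with hi0def
    have hTsub : BoxE n (fun i => if i = i0 then 2⁻¹ else 0) 1 ⊆ CubeE n 0 1 := by
      intro x hx i
      have hxi := hx i
      have hnn : (0:ℝ) ≤ if i = i0 then (2:ℝ)⁻¹ else 0 := by
        split <;> norm_num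
      simp only [Pi.zero_apply, Pi.one_apply] at hxi ⊢
      constructor <;> [linarith [hxi.1]; linarith [hxi.2]]
    have hTvol : volume (BoxE n (fun i => if i = i0 then 2⁻¹ else 0) 1) =
        ENNReal.ofReal 2⁻¹ := by
      rw [volume_boxE]
      rw [Finset.prod_eq_single i0]
      · norm_num
      · intro b _ hb
        simp [hb]
      · intro hmem
        exact absurd (Finset.mem_univ i0) hmem
    have hpt : ∀ x ∈ BoxE n (fun i => if i = i0 then 2⁻¹ else 0) 1,
        ENNReal.ofReal ((2⁻¹:ℝ) ^ (((n:ℝ) - δ) * (p - 1)))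
          ≤ ENNReal.ofReal (‖x‖ ^ (((n:ℝ) - δ) * (p - 1))) := by
      intro x hx
      apply ENNReal.ofReal_le_ofReal
      have h1 : (2⁻¹:ℝ) ≤ x i0 := by
        have := (hx i0).1
        simpa using this
      have h2 : (2⁻¹:ℝ) ≤ ‖x‖ := by
        have := abs_coord_le_norm x i0
        have := le_abs_self (x i0)
        linarith
      exact Real.rpow_le_rpow (by norm_num) h2 hβ0.le
    calc ENNReal.ofReal ((2:ℝ)⁻¹ ^ ((n:ℝ)*(p-1)) * 2⁻¹)
        ≤ ENNReal.ofReal ((2⁻¹:ℝ) ^ (((n:ℝ) - δ) * (p - 1)) * 2⁻¹) := by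
          apply ENNReal.ofReal_le_ofReal
          have hmono : (2:ℝ)⁻¹ ^ ((n:ℝ)*(p-1)) ≤ (2⁻¹:ℝ) ^ (((n:ℝ) - δ) * (p - 1)) := by
            apply Real.rpow_le_rpow_of_exponent_ge (by norm_num) (by norm_num)
            nlinarith
          nlinarith [Real.rpow_pos_of_pos (show (0:ℝ) < 2⁻¹ by norm_num)
            (((n:ℝ) - δ) * (p - 1))]
      _ = ENNReal.ofReal ((2⁻¹:ℝ) ^ (((n:ℝ) - δ) * (p - 1))) * ENNReal.ofReal 2⁻¹ :=
          ENNReal.ofReal_mul (by positivity)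
      _ = ENNReal.ofReal ((2⁻¹:ℝ) ^ (((n:ℝ) - δ) * (p - 1))) *
          volume (BoxE n (fun i => if i = i0 then 2⁻¹ else 0) 1) := by rw [hTvol]
      _ = ∫⁻ _x in BoxE n (fun i => if i = i0 then 2⁻¹ else 0) 1,
            ENNReal.ofReal ((2⁻¹:ℝ) ^ (((n:ℝ) - δ) * (p - 1))) :=
          (setLIntegral_const _ _).symm
      _ ≤ ∫⁻ x in BoxE n (fun i => if i = i0 then 2⁻¹ else 0) 1,
            ENNReal.ofReal (‖x‖ ^ (((n:ℝ) - δ) * (p - 1))) :=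
          setLIntegral_mono' (boxE_measurable n _ _) hpt
      _ ≤ ∫⁻ x in CubeE n 0 1, ENNReal.ofReal (‖x‖ ^ (((n:ℝ) - δ) * (p - 1))) :=
          lintegral_mono_set hTsub
  have hA2low : ENNReal.ofReal (cL * δ⁻¹)
      ≤ setAvgE n (CubeE n 0 1) (fun x => ‖x‖ ^ (δ - (n:ℝ))) := by
    rw [setAvgE, hQV, inv_one, one_mul, hQ1box]
    calc ENNReal.ofReal (cL * δ⁻¹)
        = ENNReal.ofReal ((Real.sqrt n) ^ (-(n:ℝ)) * 2⁻¹ * δ⁻¹) := by rw [hcL]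
      _ ≤ _ := lintegral_unitbox_lb n hn hδ0 hδ1
  have hprod : ENNReal.ofReal (c * δ ^ (1 - p)) ≤
      setAvgE n (CubeE n 0 1) (fun x => ‖x‖ ^ (((n:ℝ) - δ) * (p - 1))) *
        (setAvgE n (CubeE n 0 1) (fun x => ‖x‖ ^ (δ - (n:ℝ)))) ^ (p - 1) := by
    have hclδ : (cL * δ⁻¹) ^ (p-1) = cL^(p-1) * δ^(1-p) := by
      rw [Real.mul_rpow hcL0.le (by positivity)]
      congr 1
      rw [← Real.rpow_neg_one δ, ← Real.rpow_mul hδ0.le]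
      congr 1
      ring
    calc ENNReal.ofReal (c * δ ^ (1 - p))
        = ENNReal.ofReal (((2:ℝ)⁻¹ ^ ((n:ℝ)*(p-1)) * 2⁻¹) * (cL * δ⁻¹) ^ (p-1)) := by
          rw [hc, hclδ]; ring_nf
      _ = ENNReal.ofReal ((2:ℝ)⁻¹ ^ ((n:ℝ)*(p-1)) * 2⁻¹) *
          ENNReal.ofReal ((cL * δ⁻¹) ^ (p-1)) := ENNReal.ofReal_mul (by positivity)
      _ = ENNReal.ofReal ((2:ℝ)⁻¹ ^ ((n:ℝ)*(p-1)) * 2⁻¹) *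
          (ENNReal.ofReal (cL * δ⁻¹)) ^ (p-1) := by
          rw [ENNReal.ofReal_rpow_of_nonneg (by positivity) hp1.le]
      _ ≤ setAvgE n (CubeE n 0 1) (fun x => ‖x‖ ^ (((n:ℝ) - δ) * (p - 1))) *
          (setAvgE n (CubeE n 0 1) (fun x => ‖x‖ ^ (δ - (n:ℝ)))) ^ (p - 1) :=
          mul_le_mul' hA1low (ENNReal.rpow_le_rpow hA2low hp1.le)
  rw [← hσeq] at hprod
  refine ⟨?_, ?_, ?_⟩
  · refine hprod.trans ?_
    rw [ApConstE]
    exact le_iSup_of_le (0 : Fin n → ℝ) (le_iSup_of_le (1:ℝ) (le_iSup_of_le one_pos (le_refl _)))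
  · rw [ApConstE]
    exact iSup_le fun a => iSup_le fun h => iSup_le fun hh => key a h hh
  · refine lt_of_le_of_lt ?_
      (ENNReal.ofReal_lt_top (r := (CA + CB + c + 1) * δ ^ (1 - p)))
    rw [ApConstE]
    exact iSup_le fun a => iSup_le fun h => iSup_le fun hh => key a h hh
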